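/- Let R : ℝ → ℝ be differentiable with R(t) > 0 for all t ∈ ℝ, and suppose R satisfies the functional equation R(t) = R(t − 2·R(t)) for all t ∈ ℝ. Then R is constant. -/
import Mathlib


/-- The analytic core of Proposition 3 of the paper: a positive differentiable
function `R` satisfying the functional equation `R(t) = R(t - 2 R(t))` for all
`t ∈ ℝ` is constant. -/
theorem functional_equation_implies_constant
    (R : ℝ → ℝ) (hR : Differentiable ℝ R)
    (hRpos : ∀ t : ℝ, R t > 0)
    (hfe : ∀ t : ℝ, R t = R (t - 2 * R t)) :
    ∃ c : ℝ, ∀ t : ℝ, R t = c := by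
  -- chain rule
  have hg : ∀ t : ℝ, HasDerivAt (fun s => s - 2 * R s) (1 - 2 * deriv R t) t := by
    intro t
    exact (hasDerivAt_id t).sub (((hR t).hasDerivAt).const_mul 2)
  have hchain : ∀ t : ℝ,
      deriv R t = deriv R (t - 2 * R t) * (1 - 2 * deriv R t) := by
    intro t
    have h1 : HasDerivAt (fun s => R (s - 2 * R s))
        (deriv R (t - 2 * R t) * (1 - 2 * deriv R t)) t :=
      ((hR (t - 2 * R t)).hasDerivAt).comp t (hg t)
    have h2 : (fun s => R (s - 2 * R s)) = R := by
      funext s; exact (hfe s).symm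
    rw [h2] at h1
    exact ((hR t).hasDerivAt.unique h1)
  -- deriv R never equals 1/2
  have hne : ∀ t : ℝ, deriv R t ≠ 1 / 2 := by
    intro t ht
    have := hchain t
    rw [ht] at this
    norm_num at this
  -- there is a point where deriv R = 0 (Rolle)
  obtain ⟨c, _, hc0⟩ : ∃ c ∈ Set.Ioo (0 - 2 * R 0) 0, deriv R c = 0 := by
    apply exists_deriv_eq_zero
    · linarith [hRpos 0]
    · exact hR.continuous.continuousOn
    · exact (hfe 0).symm
  -- Darboux: deriv R < 1/2 everywhere
  have hlt : ∀ t : ℝ, deriv R t < 1 / 2 := by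
    intro t
    by_contra h
    push_neg at h
    have h' : (1:ℝ)/2 < deriv R t := lt_of_le_of_ne h (Ne.symm (hne t))
    have hoc : Set.OrdConnected (deriv R '' Set.univ) :=
      Set.ordConnected_univ.image_deriv (fun x _ => hR x)
    have h12 : (1:ℝ)/2 ∈ deriv R '' Set.univ := by
      have hmem := hoc.out ⟨c, Set.mem_univ c, hc0⟩ ⟨t, Set.mem_univ t, rfl⟩
      apply hmem
      constructor
      · norm_num
      · exact le_of_lt h'
    obtain ⟨x, -, hx⟩ := h12
    exact hne x hx
  -- g is strictly monotone
  have hgmono : StrictMono (fun s : ℝ => s - 2 * R s) :=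
    strictMono_of_hasDerivAt_pos (f' := fun t => 1 - 2 * deriv R t) hg
      (fun x => by show (0:ℝ) < 1 - 2 * deriv R x; linarith [hlt x])
  -- iterates: R (t - 2 n R t) = R t, and g^[n] t = t - 2 n R t
  have hiter : ∀ (n : ℕ) (t : ℝ),
      R (t - 2 * n * R t) = R t ∧
      (fun s : ℝ => s - 2 * R s)^[n] t = t - 2 * n * R t := by
    intro n
    induction n with
    | zero => intro t; simp
    | succ n ih =>
      intro t
      obtain ⟨hRn, hgn⟩ := ih t
      constructor
      · have key := hfe (t - 2 * n * R t)
        rw [hRn] at key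
        have harg : t - 2 * (n:ℝ) * R t - 2 * R t = t - 2 * ((n:ℕ)+1 : ℕ) * R t := by
          push_cast; ring
        rw [harg] at key
        exact key.symm
      · rw [Function.iterate_succ_apply', hgn]
        show (t - 2 * n * R t) - 2 * R (t - 2 * n * R t) = t - 2 * ((n:ℕ)+1 : ℕ) * R t
        rw [hRn]; push_cast; ring
  -- R is antitone
  have hanti : ∀ u v : ℝ, u < v → R v ≤ R u := by
    intro u v huv
    by_contra h
    push_neg at h
    obtain ⟨n, hn⟩ := exists_nat_gt ((v - u) / (2 * (R u - R v)) * (-1) + (v - u) / (2 * (R v - R u)))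
    -- use strict monotonicity of iterates
    have hmono : ∀ m : ℕ, u - 2 * m * R u < v - 2 * m * R v := by
      intro m
      have := (hgmono.iterate m) huv
      rwa [(hiter m u).2, (hiter m v).2] at this
    obtain ⟨N, hN⟩ := exists_nat_gt ((v - u) / (2 * (R v - R u)))
    have hm := hmono N
    have hpos : 0 < R v - R u := by linarith
    have : (v - u) / (2 * (R v - R u)) < N := hN
    have h2 : v - u < 2 * N * (R v - R u) := by
      rw [div_lt_iff₀ (by linarith)] at this
      linarith [this]
    linarith
  -- conclude: R t = R 0 for all t
  refine ⟨R 0, fun t => ?_⟩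
  rcases le_or_gt t 0 with ht | ht
  · rcases eq_or_lt_of_le ht with rfl | ht'
    · rfl
    -- t < 0 : use points 0 - 2 n R 0 going below t
    obtain ⟨n, hn⟩ := exists_nat_gt ((0 - t) / (2 * R 0))
    have hpt : R (0 - 2 * n * R 0) = R 0 := (hiter n 0).1
    have hlow : 0 - 2 * n * R 0 < t := by
      rw [div_lt_iff₀ (by linarith [hRpos 0])] at hn
      linarith
    have h1 : R t ≤ R (0 - 2 * n * R 0) := hanti _ _ hlow
    have h2 : R 0 ≤ R t := hanti _ _ ht'
    rw [hpt] at h1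
    linarith
  · -- t > 0 : use points t - 2 n R t going below 0
    obtain ⟨n, hn⟩ := exists_nat_gt (t / (2 * R t))
    have hpt : R (t - 2 * n * R t) = R t := (hiter n t).1
    have hlow : t - 2 * n * R t < 0 := by
      rw [div_lt_iff₀ (by linarith [hRpos t])] at hn
      linarith
    have h1 : R 0 ≤ R (t - 2 * n * R t) := hanti _ _ hlow
    have h2 : R t ≤ R 0 := hanti _ _ ht
    rw [hpt] at h1
    linarith
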